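/- arXiv:1602.00256 — 4 statements merged into one kernel-verified Lean document; each statement's English description precedes it below -/
import Mathlib

section
/- Let X₁, X₂, … be i.i.d. real random variables with E|X₁| < ∞ and E X₁² = ∞. Then for every fixed k > 0, the probability p_n = P(|X₁ − x̄_n| > k s_n) tends to 0 as n → ∞. -/
open MeasureTheory ProbabilityTheory Filter Finset Topology

/-- Empirical mean `x̄ₙ = (1/n) ∑_{j<n} X_j`. -/
noncomputable def empMean {Ω : Type*} (X : ℕ → Ω → ℝ) (n : ℕ) (ω : Ω) : ℝ :=
  (∑ j ∈ Finset.range n, X j ω) / n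

/-- Empirical standard deviation `sₙ = √((1/n) ∑_{j<n} (X_j - x̄ₙ)²)`. -/
noncomputable def empStd {Ω : Type*} (X : ℕ → Ω → ℝ) (n : ℕ) (ω : Ω) : ℝ :=
  Real.sqrt ((∑ j ∈ Finset.range n, (X j ω - empMean X n ω) ^ 2) / n)

lemma sqrt_tendsto_atTop' : Filter.Tendsto Real.sqrt Filter.atTop Filter.atTop := by
  apply tendsto_atTop_atTop_of_monotone (fun a b h => Real.sqrt_le_sqrt h)
  intro b
  exact ⟨b ^ 2, by rw [Real.sqrt_sq_eq_abs]; exact le_abs_self b⟩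

lemma sum_sub_const_sq (n : ℕ) (a : ℕ → ℝ) (c : ℝ) :
    ∑ j ∈ Finset.range n, (a j - c) ^ 2 =
      (∑ j ∈ Finset.range n, (a j) ^ 2) - 2 * c * (∑ j ∈ Finset.range n, a j) + n * c ^ 2 := by
  induction n with
  | zero => simp
  | succ n ih =>
      rw [Finset.sum_range_succ, Finset.sum_range_succ (f := fun j => (a j) ^ 2),
        Finset.sum_range_succ (f := a), ih]
      push_cast; ring

/-- The finite-mean infinite-variance case of Theorem 1 of the paper: if
`X₁, X₂, …` are i.i.d. with `E|X₁| < ∞` and `E X₁² = ∞`, then for every fixed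
`k > 0` the probability `pₙ = P(|X₁ - x̄ₙ| > k sₙ)` tends to `0`. -/
theorem outlier_prob_tendsto_zero_of_infinite_variance
    {Ω : Type*} [MeasurableSpace Ω] (μ : Measure Ω) [IsProbabilityMeasure μ]
    (X : ℕ → Ω → ℝ) (hmeas : ∀ i, Measurable (X i))
    (hindep : iIndepFun X μ)
    (hident : ∀ i, IdentDistrib (X i) (X 0) μ μ)
    (hint : Integrable (X 0) μ)
    (hvar : ∫⁻ ω, ENNReal.ofReal ((X 0 ω) ^ 2) ∂μ = ⊤)
    (k : ℝ) (hk : 0 < k) :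
    Tendsto (fun n => μ {ω | k * empStd X n ω < |X 0 ω - empMean X n ω|})
      atTop (𝓝 0) := by
  -- truncated squares
  set f : ℕ → ℝ → ℝ := fun M x => min (x ^ 2) M with hf
  have hfmeas : ∀ M, Measurable (f M) := fun M => (measurable_id.pow_const 2).min measurable_const
  have hfnonneg : ∀ M x, 0 ≤ f M x := fun M x => le_min (sq_nonneg x) (Nat.cast_nonneg M)
  have hfleM : ∀ M x, f M x ≤ M := fun M x => min_le_right _ _
  have hfle : ∀ M x, f M x ≤ x ^ 2 := fun M x => min_le_left _ _
  set Y : ℕ → ℕ → Ω → ℝ := fun M i => f M ∘ X i with hY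
  have hYint : ∀ M, Integrable (Y M 0) μ := by
    intro M
    refine ⟨((hfmeas M).comp (hmeas 0)).aestronglyMeasurable, ?_⟩
    apply HasFiniteIntegral.of_bounded (C := (M : ℝ))
    filter_upwards with ω
    show ‖f M (X 0 ω)‖ ≤ (M : ℝ)
    rw [Real.norm_eq_abs, abs_of_nonneg (hfnonneg M _)]
    exact hfleM M _
  -- a.e. convergence of truncated averages (SLLN)
  have hSLLNY : ∀ M : ℕ, ∀ᵐ ω ∂μ,
      Tendsto (fun n : ℕ => (∑ i ∈ range n, Y M i ω) / n) atTop (𝓝 (μ[Y M 0])) :=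
    fun M => strong_law_ae_real (Y M) (hYint M)
      (fun i j hij => (hindep.indepFun hij).comp (hfmeas M) (hfmeas M))
      (fun i => (hident i).comp (hfmeas M))
  -- the truncated means blow up
  have hI : ∀ C : ℝ, ∃ M : ℕ, C < μ[Y M 0] := by
    intro C
    by_contra h
    push_neg at h
    have h' : ∀ M : ℕ, ∫ x, f M (X 0 x) ∂μ ≤ C := fun M => h M
    have hmono : Monotone fun M : ℕ => fun ω => ENNReal.ofReal (f M (X 0 ω)) := by
      intro M N hMN ω
      exact ENNReal.ofReal_le_ofReal (le_min (hfle M _) (le_trans (hfleM M _) (Nat.cast_le.2 hMN)))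
    have hsup : ∀ ω : Ω, (⨆ M : ℕ, ENNReal.ofReal (f M (X 0 ω))) = ENNReal.ofReal ((X 0 ω) ^ 2) := by
      intro ω
      apply le_antisymm
      · exact iSup_le fun M => ENNReal.ofReal_le_ofReal (hfle M _)
      · have h1 : f ⌈(X 0 ω) ^ 2⌉₊ (X 0 ω) = (X 0 ω) ^ 2 := min_eq_left (Nat.le_ceil _)
        calc ENNReal.ofReal ((X 0 ω) ^ 2)
            = ENNReal.ofReal (f ⌈(X 0 ω) ^ 2⌉₊ (X 0 ω)) := by rw [h1]
          _ ≤ _ := le_iSup (fun M : ℕ => ENNReal.ofReal (f M (X 0 ω))) _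
    have hlsup : (⨆ M : ℕ, ∫⁻ ω, ENNReal.ofReal (f M (X 0 ω)) ∂μ) = ⊤ := by
      rw [← lintegral_iSup (fun M => (show Measurable fun ω => f M (X 0 ω) from
        (hfmeas M).comp (hmeas 0)).ennreal_ofReal) (fun M N hMN ω => hmono hMN ω)]
      rw [← hvar]
      exact lintegral_congr fun ω => hsup ω
    have hle : ∀ M : ℕ, (∫⁻ ω, ENNReal.ofReal (f M (X 0 ω)) ∂μ) ≤ ENNReal.ofReal C := by
      intro M
      have hfin : (∫⁻ ω, ENNReal.ofReal (f M (X 0 ω)) ∂μ) ≠ ⊤ := by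
        refine ne_of_lt (lt_of_le_of_lt (lintegral_mono fun ω =>
          ENNReal.ofReal_le_ofReal (hfleM M _)) ?_)
        simp [lintegral_const]
      have heq : ∫ x, f M (X 0 x) ∂μ = (∫⁻ ω, ENNReal.ofReal (f M (X 0 ω)) ∂μ).toReal :=
        integral_eq_lintegral_of_nonneg_ae (ae_of_all μ fun ω => hfnonneg M _)
          (show Measurable fun ω => f M (X 0 ω) from
            (hfmeas M).comp (hmeas 0)).aestronglyMeasurable
      rw [← ENNReal.ofReal_toReal hfin]
      exact ENNReal.ofReal_le_ofReal (by rw [← heq]; exact h' M)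
    have htop : (⊤ : ENNReal) ≤ ENNReal.ofReal C := hlsup ▸ iSup_le hle
    rw [top_le_iff] at htop
    exact ENNReal.ofReal_ne_top htop
  -- SLLN for X itself
  have hSLLNX : ∀ᵐ ω ∂μ,
      Tendsto (fun n : ℕ => (∑ i ∈ range n, X i ω) / n) atTop (𝓝 (μ[X 0])) :=
    strong_law_ae_real X hint (fun i j hij => hindep.indepFun hij) hident
  -- a.e., the event eventually fails
  have hae : ∀ᵐ ω ∂μ, ∀ᶠ n in atTop,
      ¬ (k * empStd X n ω < |X 0 ω - empMean X n ω|) := by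
    have hYall : ∀ᵐ ω ∂μ, ∀ M : ℕ,
        Tendsto (fun n : ℕ => (∑ i ∈ range n, Y M i ω) / n) atTop (𝓝 (μ[Y M 0])) :=
      ae_all_iff.2 hSLLNY
    filter_upwards [hYall, hSLLNX] with ω hωY hωX
    set m := μ[X 0] with hm
    have hS2 : Tendsto (fun n : ℕ => (∑ i ∈ range n, (X i ω) ^ 2) / n) atTop atTop := by
      rw [tendsto_atTop]
      intro C
      obtain ⟨M, hM⟩ := hI C
      filter_upwards [(hωY M).eventually_const_lt hM, eventually_ge_atTop 1] with n hn hn1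
      have hnpos : (0 : ℝ) < n := by exact_mod_cast hn1
      calc C ≤ (∑ i ∈ range n, Y M i ω) / n := hn.le
        _ ≤ (∑ i ∈ range n, (X i ω) ^ 2) / n :=
            (div_le_div_iff_of_pos_right hnpos).2 (Finset.sum_le_sum fun i _ => hfle M (X i ω))
    have hvar_id : ∀ n : ℕ, 1 ≤ n →
        (∑ j ∈ range n, (X j ω - empMean X n ω) ^ 2) / n
          = -(empMean X n ω) ^ 2 + (∑ j ∈ range n, (X j ω) ^ 2) / n := by
      intro n hn
      have hnpos : (0 : ℝ) < n := by exact_mod_cast hn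
      rw [sum_sub_const_sq n (fun j => X j ω) (empMean X n ω)]
      have hmm : empMean X n ω = (∑ j ∈ range n, X j ω) / n := rfl
      rw [hmm]
      field_simp
      ring
    have hT : Tendsto (fun n : ℕ =>
        (∑ j ∈ range n, (X j ω - empMean X n ω) ^ 2) / n) atTop atTop := by
      have hmean : Tendsto (fun n : ℕ => empMean X n ω) atTop (𝓝 m) := hωX
      have h1 : Tendsto (fun n : ℕ =>
          -(empMean X n ω) ^ 2 + (∑ i ∈ range n, (X i ω) ^ 2) / n) atTop atTop :=
        Filter.Tendsto.add_atTop ((hmean.pow 2).neg) hS2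
      apply h1.congr'
      filter_upwards [eventually_ge_atTop 1] with n hn
      exact (hvar_id n hn).symm
    have hstd : Tendsto (fun n : ℕ => empStd X n ω) atTop atTop :=
      sqrt_tendsto_atTop'.comp hT
    have hks : Tendsto (fun n : ℕ => k * empStd X n ω) atTop atTop := hstd.const_mul_atTop hk
    have habs : Tendsto (fun n : ℕ => |X 0 ω - empMean X n ω|) atTop (𝓝 |X 0 ω - m|) :=
      (tendsto_const_nhds.sub hωX).abs
    filter_upwards [hks.eventually_gt_atTop (|X 0 ω - m| + 1),
      habs.eventually_lt_const (lt_add_one _)] with n h1 h2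
    exact not_lt.2 (le_of_lt (h2.trans h1))
  -- measurability of the events
  have hmeasE : ∀ n, MeasurableSet {ω | k * empStd X n ω < |X 0 ω - empMean X n ω|} := by
    intro n
    have hmean : Measurable (empMean X n) :=
      (Finset.measurable_sum _ fun i _ => hmeas i).div_const _
    have hstd : Measurable (empStd X n) :=
      Real.continuous_sqrt.measurable.comp
        ((Finset.measurable_sum _ fun i _ => ((hmeas i).sub hmean).pow_const 2).div_const _)
    exact measurableSet_lt (measurable_const.mul hstd) ((hmeas 0).sub hmean).abs
  have hmain := tendsto_measure_of_ae_tendsto_indicator_of_isFiniteMeasure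
    (μ := μ) atTop (A := (∅ : Set Ω)) MeasurableSet.empty hmeasE ?_
  · simpa using hmain
  · filter_upwards [hae] with ω hω
    filter_upwards [hω] with n hn
    simp only [Set.mem_setOf_eq, Set.mem_empty_iff_false, iff_false]
    exact hn
end

section
/- Let X₁, X₂, … be i.i.d. real random variables with E X₁² < ∞, mean a = E X₁ and variance σ² = Var X₁ > 0, whose distribution has non-compact support, i.e. P(|X₁ − a| > M) > 0 for every M > 0. Fix k > 0 and suppose P(|X₁ − a| = kσ) = 0. Then p_n = P(|X₁ − x̄_n| > k s_n) converges as n → ∞ to P(|X₁ − a| > kσ), and this limit is strictly positive. -/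
open MeasureTheory ProbabilityTheory Filter Finset Topology

lemma empVar_eq {Ω : Type*} (X : ℕ → Ω → ℝ) (n : ℕ) (ω : Ω) :
    (∑ j ∈ Finset.range n, (X j ω - empMean X n ω) ^ 2) / n
      = (∑ j ∈ Finset.range n, (X j ω) ^ 2) / n - (empMean X n ω) ^ 2 := by
  rcases Nat.eq_zero_or_pos n with rfl | hn
  · simp [empMean]
  have hn' : (n : ℝ) ≠ 0 := Nat.cast_ne_zero.2 hn.ne'
  set S := ∑ j ∈ Finset.range n, X j ω with hS
  have hm : empMean X n ω = S / n := rfl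
  have expand : ∑ j ∈ Finset.range n, (X j ω - S / n) ^ 2
      = (∑ j ∈ Finset.range n, (X j ω) ^ 2) - 2 * (S / n) * S + n * (S / n) ^ 2 := by
    have : ∀ j ∈ Finset.range n,
        (X j ω - S / n) ^ 2 = (X j ω) ^ 2 - 2 * (S / n) * X j ω + (S / n) ^ 2 := by
      intro j _; ring
    rw [Finset.sum_congr rfl this, Finset.sum_add_distrib, Finset.sum_sub_distrib,
      ← Finset.mul_sum, Finset.sum_const, Finset.card_range, nsmul_eq_mul]
  rw [hm, expand]
  field_simp
  ring

/-- For i.i.d. random variables with finite second moment, positive variance and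
non-compact support, the outlier probability `pₙ = P(|X₁ - x̄ₙ| > k sₙ)` converges to
the strictly positive limit `P(|X₁ - a| > kσ)`. -/
theorem outlier_prob_tendsto_pos_of_finite_variance
    {Ω : Type*} [MeasurableSpace Ω] (μ : Measure Ω) [IsProbabilityMeasure μ]
    (X : ℕ → Ω → ℝ) (hmeas : ∀ i, Measurable (X i))
    (hindep : iIndepFun X μ)
    (hident : ∀ i, IdentDistrib (X i) (X 0) μ μ)
    (hL2 : MemLp (X 0) 2 μ)
    (a σ : ℝ) (ha : a = ∫ ω, X 0 ω ∂μ)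
    (hσ : σ = Real.sqrt (variance (X 0) μ)) (hσpos : 0 < σ)
    (hsupp : ∀ M > (0 : ℝ), 0 < μ {ω | M < |X 0 ω - a|})
    (k : ℝ) (hk : 0 < k)
    (hcont : μ {ω | |X 0 ω - a| = k * σ} = 0) :
    Tendsto (fun n => μ {ω | k * empStd X n ω < |X 0 ω - empMean X n ω|})
        atTop (𝓝 (μ {ω | k * σ < |X 0 ω - a|})) ∧
      0 < μ {ω | k * σ < |X 0 ω - a|} := by
  have hpos : 0 < μ {ω | k * σ < |X 0 ω - a|} := hsupp (k * σ) (mul_pos hk hσpos)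
  refine ⟨?_, hpos⟩
  -- measurability
  have hmeanMeas : ∀ n, Measurable (fun ω => empMean X n ω) := by
    intro n
    exact (Finset.measurable_sum _ fun j _ => hmeas j).div_const _
  have hstdMeas : ∀ n, Measurable (fun ω => empStd X n ω) := by
    intro n
    apply Measurable.sqrt
    exact (Finset.measurable_sum _ fun j _ => ((hmeas j).sub (hmeanMeas n)).pow_const 2).div_const _
  have hA : MeasurableSet {ω | k * σ < |X 0 ω - a|} :=
    measurableSet_lt measurable_const (((hmeas 0).sub measurable_const).abs)
  have hAn : ∀ n, MeasurableSet {ω | k * empStd X n ω < |X 0 ω - empMean X n ω|} := by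
    intro n
    exact measurableSet_lt ((hstdMeas n).const_mul k) (((hmeas 0).sub (hmeanMeas n)).abs)
  -- strong law for X
  have hpair : Pairwise (Function.onFun (IndepFun · · μ) X) := fun i j hij => hindep.indepFun hij
  have hint : Integrable (X 0) μ := hL2.integrable one_le_two
  have hslln1 : ∀ᵐ ω ∂μ, Tendsto (fun n : ℕ => (∑ i ∈ Finset.range n, X i ω) / n)
      atTop (𝓝 (∫ ω, X 0 ω ∂μ)) := strong_law_ae_real X hint hpair hident
  -- strong law for X²
  have hsqmeas : Measurable fun x : ℝ => x ^ 2 := measurable_id.pow_const 2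
  have hslln2 : ∀ᵐ ω ∂μ, Tendsto (fun n : ℕ => (∑ i ∈ Finset.range n, (X i ω) ^ 2) / n)
      atTop (𝓝 (∫ ω, (X 0 ω) ^ 2 ∂μ)) := by
    have := strong_law_ae_real (fun i => fun ω => (X i ω) ^ 2) hL2.integrable_sq
      (fun i j hij => (hpair hij).comp hsqmeas hsqmeas)
      (fun i => (hident i).comp hsqmeas)
    exact this
  -- variance identity
  have hσ2 : σ ^ 2 = variance (X 0) μ := by
    rw [hσ, Real.sq_sqrt (variance_nonneg _ _)]
  have hvar : variance (X 0) μ = (∫ ω, (X 0 ω) ^ 2 ∂μ) - a ^ 2 := by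
    rw [variance_eq_sub hL2, ha]
    rfl
  -- a.e. pointwise convergence of set membership
  have hne : ∀ᵐ ω ∂μ, ¬(|X 0 ω - a| = k * σ) := by
    rw [← compl_mem_ae_iff] at hcont
    filter_upwards [hcont] with ω hω using hω
  have hlim : ∀ᵐ ω ∂μ, ∀ᶠ n in atTop,
      (ω ∈ {ω | k * empStd X n ω < |X 0 ω - empMean X n ω|} ↔
        ω ∈ {ω | k * σ < |X 0 ω - a|}) := by
    filter_upwards [hslln1, hslln2, hne] with ω h1 h2 hωne
    have hmean : Tendsto (fun n => empMean X n ω) atTop (𝓝 a) := by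
      rw [ha]; exact h1
    have hstd : Tendsto (fun n => empStd X n ω) atTop (𝓝 σ) := by
      have hinner : Tendsto (fun n => (∑ j ∈ Finset.range n, (X j ω - empMean X n ω) ^ 2) / n)
          atTop (𝓝 (σ ^ 2)) := by
        simp_rw [empVar_eq X _ ω]
        have : Tendsto (fun n => (∑ j ∈ Finset.range n, (X j ω) ^ 2) / (n : ℝ)
            - (empMean X n ω) ^ 2) atTop (𝓝 ((∫ ω, (X 0 ω) ^ 2 ∂μ) - a ^ 2)) :=
          h2.sub (hmean.pow 2)
        rw [← hvar, ← hσ2] at this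
        exact this
      have h3 := (Real.continuous_sqrt.tendsto (σ ^ 2)).comp hinner
      rw [Real.sqrt_sq hσpos.le] at h3
      exact h3
    have hF : Tendsto (fun n => k * empStd X n ω) atTop (𝓝 (k * σ)) :=
      hstd.const_mul k
    have hG : Tendsto (fun n => |X 0 ω - empMean X n ω|) atTop (𝓝 (|X 0 ω - a|)) :=
      (tendsto_const_nhds.sub hmean).abs
    rcases lt_or_gt_of_ne hωne with hlt | hgt
    · -- |X 0 ω - a| < k σ : both memberships eventually false
      filter_upwards [hG.eventually_lt hF hlt] with n hn
      constructor
      · intro h; exact absurd h (not_lt.2 hn.le)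
      · intro h; exact absurd h (not_lt.2 hlt.le)
    · -- k σ < |X 0 ω - a| : both memberships eventually true
      filter_upwards [hF.eventually_lt hG hgt] with n hn
      exact ⟨fun _ => hgt, fun _ => hn⟩
  exact tendsto_measure_of_ae_tendsto_indicator_of_isFiniteMeasure atTop hA hAn hlim
end

section
/- Let F̄ : ℝ → [0,1] be the tail function of a distribution with exponential tail: F̄(x)·e^{ax} → C as x → ∞ for some constants a > 0 and C > 0. Fix p ∈ (0,1) and σ > 0. Then there exists K > 0 such that for all k > K, (1−p)·F̄(k√(1−p)σ) > F̄(kσ). -/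
open MeasureTheory ProbabilityTheory Filter Topology

/-- Exponential-tail case of "put tail down": if the tail function `F̄` of a distribution
satisfies `F̄(x)·e^{ax} → C` as `x → ∞` with `a, C > 0`, then for every `p ∈ (0,1)` and
`σ > 0` the inequality `(1-p)·F̄(k√(1-p)σ) > F̄(kσ)` holds for all sufficiently large `k`. -/
theorem put_tail_down_exponential_tail
    (F : ℝ → ℝ) (Fbar : ℝ → ℝ) (hFbar : ∀ x, Fbar x = 1 - F x)
    (hcdf : Monotone F) (hrange : ∀ x, Fbar x ∈ Set.Icc (0 : ℝ) 1)
    (a C : ℝ) (ha : 0 < a) (hC : 0 < C)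
    (htail : Filter.Tendsto (fun x => Fbar x * Real.exp (a * x)) atTop (𝓝 C))
    (p : ℝ) (hp0 : 0 < p) (hp1 : p < 1) (σ : ℝ) (hσ : 0 < σ) :
    ∃ K > (0 : ℝ), ∀ k > K,
      (1 - p) * Fbar (k * Real.sqrt (1 - p) * σ) > Fbar (k * σ) := by
  set s := Real.sqrt (1 - p) with hs_def
  have h1p : 0 < 1 - p := by linarith
  have hs0 : 0 < s := Real.sqrt_pos.mpr h1p
  have hs1 : s < 1 := by
    nlinarith [Real.sq_sqrt h1p.le, hs0]
  have hcomp1 : Tendsto (fun k : ℝ => k * s * σ) atTop atTop :=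
    (tendsto_id.atTop_mul_const hs0).atTop_mul_const hσ
  have hcomp2 : Tendsto (fun k : ℝ => k * σ) atTop atTop :=
    tendsto_id.atTop_mul_const hσ
  have hg : Tendsto (fun k : ℝ => Fbar (k * s * σ) * Real.exp (a * (k * s * σ)))
      atTop (𝓝 C) := htail.comp hcomp1
  have hg' : Tendsto (fun k : ℝ => (1 - p) * (Fbar (k * s * σ) * Real.exp (a * (k * s * σ))))
      atTop (𝓝 ((1 - p) * C)) := hg.const_mul _
  have hh0 : Tendsto (fun k : ℝ => Fbar (k * σ) * Real.exp (a * (k * σ)))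
      atTop (𝓝 C) := htail.comp hcomp2
  have hlin : Tendsto (fun k : ℝ => a * (k * s * σ) - a * (k * σ)) atTop atBot := by
    have hcoef : a * σ * (s - 1) < 0 := by nlinarith [mul_pos ha hσ]
    have := tendsto_id.atTop_mul_const_of_neg (f := fun k : ℝ => k) (l := atTop) hcoef
    refine this.congr (fun k => by ring)
  have hexp : Tendsto (fun k : ℝ => Real.exp (a * (k * s * σ) - a * (k * σ))) atTop (𝓝 0) :=
    Real.tendsto_exp_atBot.comp hlin
  have hh : Tendsto (fun k : ℝ => Fbar (k * σ) * Real.exp (a * (k * s * σ))) atTop (𝓝 0) := by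
    have := hh0.mul hexp
    rw [mul_zero] at this
    refine this.congr (fun k => ?_)
    rw [mul_assoc, ← Real.exp_add]
    ring_nf
  have hdiff : Tendsto (fun k : ℝ =>
      (1 - p) * (Fbar (k * s * σ) * Real.exp (a * (k * s * σ)))
        - Fbar (k * σ) * Real.exp (a * (k * s * σ))) atTop (𝓝 ((1 - p) * C)) := by
    simpa using hg'.sub hh
  have hpos : (0 : ℝ) < (1 - p) * C := by positivity
  have hev : ∀ᶠ k in atTop,
      0 < (1 - p) * (Fbar (k * s * σ) * Real.exp (a * (k * s * σ)))
        - Fbar (k * σ) * Real.exp (a * (k * s * σ)) :=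
    hdiff.eventually (eventually_gt_nhds hpos)
  obtain ⟨K', hK'⟩ := eventually_atTop.mp hev
  refine ⟨max K' 1, lt_of_lt_of_le one_pos (le_max_right _ _), fun k hk => ?_⟩
  have hk' : k ≥ K' := le_of_lt (lt_of_le_of_lt (le_max_left _ _) hk)
  have h := hK' k hk'
  have hE : 0 < Real.exp (a * (k * s * σ)) := Real.exp_pos _
  nlinarith [h, hE]
end

section
/- Let F̄ : ℝ → [0,1] be the tail function of a distribution with power tail: F̄(x)·x^α → C as x → ∞ for some constants α > 2 and C > 0. Fix p ∈ (0,1) and σ > 0. Then there exists K > 0 such that for all k > K, (1−p)·F̄(k√(1−p)σ) > F̄(kσ). -/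
open MeasureTheory ProbabilityTheory Filter Topology

/-- Power-tail case of "put tail down": if the tail function `F̄` of a distribution
satisfies `F̄(x)·x^α → C` as `x → ∞` with `α > 2`, `C > 0`, then for every `p ∈ (0,1)` and
`σ > 0` the inequality `(1-p)·F̄(k√(1-p)σ) > F̄(kσ)` holds for all sufficiently large `k`. -/
theorem put_tail_down_power_tail
    (F : ℝ → ℝ) (Fbar : ℝ → ℝ) (hFbar : ∀ x, Fbar x = 1 - F x)
    (hcdf : Monotone F) (hrange : ∀ x, Fbar x ∈ Set.Icc (0 : ℝ) 1)
    (α C : ℝ) (hα : 2 < α) (hC : 0 < C)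
    (htail : Filter.Tendsto (fun x => Fbar x * x ^ α) atTop (𝓝 C))
    (p : ℝ) (hp0 : 0 < p) (hp1 : p < 1) (σ : ℝ) (hσ : 0 < σ) :
    ∃ K > (0 : ℝ), ∀ k > K,
      (1 - p) * Fbar (k * Real.sqrt (1 - p) * σ) > Fbar (k * σ) := by
  set q : ℝ := 1 - p with hq
  have hq0 : 0 < q := by simp [hq]; linarith
  have hq1 : q < 1 := by simp [hq]; linarith
  set s : ℝ := Real.sqrt q with hs
  have hs0 : 0 < s := Real.sqrt_pos.mpr hq0
  have hg : Tendsto (fun k => Fbar (k * σ) * (k * σ) ^ α) atTop (𝓝 C) :=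
    htail.comp (tendsto_id.atTop_mul_const hσ)
  have hh : Tendsto (fun k => Fbar (k * s * σ) * (k * s * σ) ^ α) atTop (𝓝 C) := by
    have := htail.comp (tendsto_id.atTop_mul_const (mul_pos hs0 hσ))
    refine this.congr (fun k => ?_)
    simp [Function.comp, mul_assoc]
  -- the rescaled limit
  have hfac : 1 < q * s ^ (-α) := by
    have h1 : s ^ (-α) = q ^ (-(α/2)) := by
      rw [hs, Real.sqrt_eq_rpow, ← Real.rpow_mul hq0.le]
      ring_nf
    have h2 : q * s ^ (-α) = q ^ (1 - α/2) := by
      rw [h1, show (1 - α/2) = 1 + (-(α/2)) by ring, Real.rpow_add hq0, Real.rpow_one]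
    rw [h2]
    rw [Real.one_lt_rpow_iff_of_pos hq0]
    right
    constructor
    · exact hq1
    · linarith
  have hf : Tendsto (fun k => (q * Fbar (k * s * σ)) * (k * σ) ^ α) atTop
      (𝓝 (C * (q * s ^ (-α)))) := by
    have h2 := hh.mul_const (q * s ^ (-α))
    refine h2.congr' ?_
    filter_upwards [eventually_gt_atTop (0:ℝ)] with k hk
    have hkσ : (0:ℝ) < k * σ := mul_pos hk hσ
    have hexp : (k * s * σ) ^ α = (k * σ) ^ α * s ^ α := by
      have : k * s * σ = (k * σ) * s := by ring
      rw [this, Real.mul_rpow hkσ.le hs0.le]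
    have hsα : s ^ α * s ^ (-α) = 1 := by
      rw [← Real.rpow_add hs0]; simp
    rw [hexp]
    rw [mul_comm (s ^ α) (s ^ (-α))] at hsα
    calc Fbar (k * s * σ) * ((k * σ) ^ α * s ^ α) * (q * s ^ (-α))
        = Fbar (k * s * σ) * (k * σ) ^ α * q * (s ^ (-α) * s ^ α) := by ring
      _ = q * Fbar (k * s * σ) * (k * σ) ^ α := by rw [hsα]; ring
  have hlt : C < C * (q * s ^ (-α)) := by
    nlinarith
  have hev : ∀ᶠ k in atTop,
      Fbar (k * σ) * (k * σ) ^ α < (q * Fbar (k * s * σ)) * (k * σ) ^ α :=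
    hg.eventually_lt hf hlt
  rcases (eventually_atTop.mp (hev.and (eventually_gt_atTop (0:ℝ)))) with ⟨K0, hK0⟩
  refine ⟨max K0 1, lt_of_lt_of_le one_pos (le_max_right _ _), fun k hk => ?_⟩
  have hkK : K0 ≤ k := le_of_lt (lt_of_le_of_lt (le_max_left _ _) hk)
  obtain ⟨hlt', hkpos⟩ := hK0 k hkK
  have hkσ : (0:ℝ) < (k * σ) ^ α := Real.rpow_pos_of_pos (mul_pos hkpos hσ) α
  have := (mul_lt_mul_iff_left₀ hkσ).mp hlt'
  simpa [hq, hs] using this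
end
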